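/- Let E and F be real Banach spaces, let M be a C^∞ manifold modelled on E and N a C^∞ manifold modelled on F, and let f : M → N be a C^∞ map. Then the following are equivalent: (1) for every x ∈ M there exist an open neighbourhood U of f(x) in N and a map σ : N → M that is C^∞ on U and satisfies σ(f(x)) = x and f(σ(u)) = u for all u ∈ U (a smooth local section of f through x); (2) for every x ∈ M the differential of f at x, as a continuous linear map from the tangent space of M at x to the tangent space of N at f(x), admits a continuous linear right inverse (i.e. it is split surjective). -/

import Mathlib

open scoped Manifold Topology
open Set Filter

/-- For a `C^∞` map `f : M → N` between `C^∞` Banach manifolds, the following are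
equivalent: (1) through every point `x` of `M` there is a smooth local section of `f`
(defined on an open neighbourhood `U` of `f x` and sending `f x` to `x`); (2) at every
point `x` of `M` the differential `mfderiv f x` admits a continuous linear right inverse,
i.e. it is split surjective. -/
theorem stmt_18 {E F : Type*} [NormedAddCommGroup E] [NormedSpace ℝ E] [CompleteSpace E]
    [NormedAddCommGroup F] [NormedSpace ℝ F] [CompleteSpace F]
    {M N : Type*} [TopologicalSpace M] [ChartedSpace E M]
    [IsManifold (𝓘(ℝ, E)) (⊤ : ℕ∞) M]
    [TopologicalSpace N] [ChartedSpace F N] [IsManifold (𝓘(ℝ, F)) (⊤ : ℕ∞) N]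
    (f : M → N) (hf : ContMDiff (𝓘(ℝ, E)) (𝓘(ℝ, F)) (⊤ : ℕ∞) f) :
    (∀ x : M, ∃ U : Set N, IsOpen U ∧ f x ∈ U ∧ ∃ σ : N → M,
        ContMDiffOn (𝓘(ℝ, F)) (𝓘(ℝ, E)) (⊤ : ℕ∞) σ U ∧ σ (f x) = x ∧ ∀ u ∈ U, f (σ u) = u) ↔
      ∀ x : M, ∃ s : TangentSpace (𝓘(ℝ, F)) (f x) →L[ℝ] TangentSpace (𝓘(ℝ, E)) x,
        (mfderiv (𝓘(ℝ, E)) (𝓘(ℝ, F)) f x).comp s =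
          ContinuousLinearMap.id ℝ (TangentSpace (𝓘(ℝ, F)) (f x)) := by
  have hone : (1 : WithTop ℕ∞) ≤ ((⊤ : ℕ∞) : WithTop ℕ∞) := by exact_mod_cast le_top
  constructor
  · -- sections give right inverses, by the chain rule
    intro h x
    obtain ⟨U, hUo, hxU, σ, hσ, hσfx, hsec⟩ := h x
    have hσmd : MDifferentiableAt 𝓘(ℝ, F) 𝓘(ℝ, E) σ (f x) :=
      (hσ.contMDiffAt (hUo.mem_nhds hxU)).mdifferentiableAt (by simp)
    have hfmd : MDifferentiableAt 𝓘(ℝ, E) 𝓘(ℝ, F) f (σ (f x)) :=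
      (hf _).mdifferentiableAt (by simp)
    have hcomp := mfderiv_comp (I' := 𝓘(ℝ, E)) (f x) hfmd hσmd
    have heq : (f ∘ σ) =ᶠ[𝓝 (f x)] id := by
      filter_upwards [hUo.mem_nhds hxU] with u hu using hsec u hu
    rw [heq.mfderiv_eq, mfderiv_id] at hcomp
    rw [hσfx] at hcomp
    exact ⟨mfderiv 𝓘(ℝ, F) 𝓘(ℝ, E) σ (f x), hcomp.symm⟩
  · -- right inverses give sections, by the inverse function theorem
    intro h x
    obtain ⟨s, hs⟩ := h x
    set φ := extChartAt 𝓘(ℝ, E) x with hφ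
    set ψ := extChartAt 𝓘(ℝ, F) (f x) with hψ
    set a : E := φ x with ha
    set b : F := ψ (f x) with hb
    set s' : F →L[ℝ] E := s with hs'
    set g : E → F := fun u => ψ (f (φ.symm u)) with hg
    set q : F → E := fun w => a + s' (w - b) with hqdef
    set h₀ : F → F := fun w => g (q w) with hh₀
    have hqb : q b = a := by simp [hqdef]
    have hφx : φ.symm a = x := extChartAt_to_inv x
    have hfxsrc : f x ∈ ψ.source := mem_extChartAt_source (I := 𝓘(ℝ, F)) (f x)
    have haφt : a ∈ φ.target := mem_extChartAt_target (I := 𝓘(ℝ, E)) x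
    have hφto : IsOpen φ.target := isOpen_extChartAt_target (I := 𝓘(ℝ, E)) x
    have hψso : IsOpen ψ.source := isOpen_extChartAt_source (I := 𝓘(ℝ, F)) (f x)
    -- the set where `g` is smooth
    set Vg : Set E := φ.target ∩ (fun u => f (φ.symm u)) ⁻¹' ψ.source with hVg
    have hVgo : IsOpen Vg := by
      apply ContinuousOn.isOpen_inter_preimage _ hφto hψso
      exact hf.continuous.comp_continuousOn (continuousOn_extChartAt_symm x)
    have haVg : a ∈ Vg := ⟨haφt, by simp only [mem_preimage, hφx]; exact hfxsrc⟩
    have hgVg : ContDiffOn ℝ (⊤ : ℕ∞) g Vg := by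
      apply ContMDiffOn.contDiffOn
      have h1 : ContMDiffOn 𝓘(ℝ, E) 𝓘(ℝ, E) (⊤ : ℕ∞) φ.symm Vg :=
        (contMDiffOn_extChartAt_symm x).mono inter_subset_left
      have h2 : ContMDiffOn 𝓘(ℝ, E) 𝓘(ℝ, F) (⊤ : ℕ∞) (fun u => f (φ.symm u)) Vg :=
        hf.comp_contMDiffOn h1
      have h3 : ContMDiffOn 𝓘(ℝ, F) 𝓘(ℝ, F) (⊤ : ℕ∞) ψ ψ.source := by
        rw [hψ, extChartAt_source]
        exact contMDiffOn_extChartAt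
      exact h3.comp h2 fun u hu => hu.2
    -- identification of the differential
    have hmf : mfderiv 𝓘(ℝ, E) 𝓘(ℝ, F) f x = fderiv ℝ g a := by
      have hmd : MDifferentiableAt 𝓘(ℝ, E) 𝓘(ℝ, F) f x := (hf x).mdifferentiableAt (by simp)
      rw [mfderiv]; simp only [hmd, ite_true]
      simp only [writtenInExtChartAt, modelWithCornersSelf_coe, Set.range_id, fderivWithin_univ]
      rfl
    have hTs : (fderiv ℝ g a).comp s' = ContinuousLinearMap.id ℝ F := by
      rw [← hmf]; exact hs
    -- `h₀` is smooth near `b` with derivative `id` at `b`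
    set Vh : Set F := q ⁻¹' Vg with hVh
    have hqcd : ContDiff ℝ (⊤ : ℕ∞) q :=
      contDiff_const.add (s'.contDiff.comp (contDiff_id.sub contDiff_const))
    have hVho : IsOpen Vh := hVgo.preimage hqcd.continuous
    have hbVh : b ∈ Vh := by simp only [hVh, mem_preimage, hqb]; exact haVg
    have hh : ContDiffOn ℝ (⊤ : ℕ∞) h₀ Vh := hgVg.comp hqcd.contDiffOn (mapsTo_preimage _ _)
    have hqd : HasFDerivAt q s' b := by
      have h1 : HasFDerivAt (fun w : F => w - b) (ContinuousLinearMap.id ℝ F) b :=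
        (hasFDerivAt_id b).sub_const b
      have h2 : HasFDerivAt (fun w : F => s' (w - b))
          (s'.comp (ContinuousLinearMap.id ℝ F)) b := s'.hasFDerivAt.comp b h1
      have h3 := h2.const_add a
      rw [hqdef]
      simpa using h3
    have hgd : HasFDerivAt g (fderiv ℝ g a) a :=
      ((hgVg.contDiffAt (hVgo.mem_nhds haVg)).differentiableAt (by simp)).hasFDerivAt
    have hqb' : HasFDerivAt g (fderiv ℝ g a) (q b) := by rw [hqb]; exact hgd
    have hder : HasFDerivAt h₀ (ContinuousLinearMap.id ℝ F) b := by
      have := hqb'.comp b hqd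
      rwa [hTs] at this
    have hstrict : HasStrictFDerivAt h₀
        ((ContinuousLinearEquiv.refl ℝ F : F ≃L[ℝ] F) : F →L[ℝ] F) b :=
      (hh.contDiffAt (hVho.mem_nhds hbVh)).hasStrictFDerivAt' (by simpa using hder) (by simp)
    set Φ := hstrict.toOpenPartialHomeomorph h₀ with hΦ
    have hΦcoe : ⇑Φ = h₀ := rfl
    have hbsrc : b ∈ Φ.source := hstrict.mem_toOpenPartialHomeomorph_source
    have hb0 : h₀ b = b := by
      show g (q b) = b
      rw [hqb]
      show ψ (f (φ.symm a)) = b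
      rw [hφx]
    have hbtgt : b ∈ Φ.target := by
      have := hstrict.image_mem_toOpenPartialHomeomorph_target
      rwa [hb0] at this
    have hΦsb : Φ.symm b = b := by
      conv_lhs => rw [← hb0, ← hΦcoe]
      exact Φ.left_inv hbsrc
    -- the set where the derivative of `h₀` is invertible
    have hfc : ContinuousOn (fderiv ℝ h₀) Vh :=
      hh.continuousOn_fderiv_of_isOpen hVho hone
    set W : Set F := Vh ∩ fderiv ℝ h₀ ⁻¹' {T | IsUnit T} with hW
    have hWo : IsOpen W := hfc.isOpen_inter_preimage hVho Units.isOpen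
    have hbW : b ∈ W := by
      refine ⟨hbVh, ?_⟩
      have h1 : IsUnit (1 : F →L[ℝ] F) := isUnit_one
      rw [ContinuousLinearMap.one_def] at h1
      simpa only [mem_preimage, mem_setOf_eq, hder.fderiv] using h1
    -- smoothness of the local inverse at nearby points
    have hinv_smooth : ∀ w ∈ Φ.target, Φ.symm w ∈ W → ContDiffAt ℝ (⊤ : ℕ∞) Φ.symm w := by
      intro w hw hWw
      obtain ⟨u, hu⟩ := hWw.2
      have hfd : HasFDerivAt h₀ (fderiv ℝ h₀ (Φ.symm w)) (Φ.symm w) :=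
        ((hh.contDiffAt (hVho.mem_nhds hWw.1)).differentiableAt (by simp)).hasFDerivAt
      refine Φ.contDiffAt_symm (f₀' := ContinuousLinearEquiv.ofUnit u) hw ?_ ?_
      · rw [hΦcoe,
          show ((ContinuousLinearEquiv.ofUnit u : F →L[ℝ] F)) = fderiv ℝ h₀ (Φ.symm w) from hu]
        exact hfd
      · rw [hΦcoe]; exact hh.contDiffAt (hVho.mem_nhds hWw.1)
    -- the candidate section
    set σ : N → M := fun v => φ.symm (q (Φ.symm (ψ v))) with hσdef
    have hσfx : σ (f x) = x := by
      show φ.symm (q (Φ.symm (ψ (f x)))) = x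
      rw [← hb, hΦsb, hqb, hφx]
    -- eventual properties
    have hψc : ContinuousAt ψ (f x) := continuousAt_extChartAt (f x)
    have hψt : Tendsto ψ (𝓝 (f x)) (𝓝 b) := hψc.tendsto
    have hΦsc : ContinuousAt Φ.symm b := Φ.continuousAt_symm hbtgt
    have hΦst : Tendsto Φ.symm (𝓝 b) (𝓝 b) := by
      have := hΦsc.tendsto
      rwa [hΦsb] at this
    have hqΦt : Tendsto (fun w => q (Φ.symm w)) (𝓝 b) (𝓝 a) := by
      have hq0 : Tendsto q (𝓝 b) (𝓝 a) := by
        have := hqcd.continuous.tendsto b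
        rwa [hqb] at this
      exact hq0.comp hΦst
    have hfφt : Tendsto (fun w => f (φ.symm (q (Φ.symm w)))) (𝓝 b) (𝓝 (f x)) := by
      have h1 : Tendsto φ.symm (𝓝 a) (𝓝 x) := by
        have h0 : ContinuousAt φ.symm a := continuousAt_extChartAt_symm (I := 𝓘(ℝ, E)) x
        have h0' := h0.tendsto
        rwa [hφx] at h0'
      exact (hf.continuous.continuousAt.tendsto.comp h1).comp hqΦt
    have hEb : ∀ᶠ w in 𝓝 b, w ∈ Φ.target ∧ Φ.symm w ∈ W ∧ q (Φ.symm w) ∈ φ.target ∧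
        f (φ.symm (q (Φ.symm w))) ∈ ψ.source := by
      have e1 : ∀ᶠ w in 𝓝 b, w ∈ Φ.target := Φ.open_target.mem_nhds hbtgt
      have e2 : ∀ᶠ w in 𝓝 b, Φ.symm w ∈ W := hΦst.eventually_mem (hWo.mem_nhds hbW)
      have e3 : ∀ᶠ w in 𝓝 b, q (Φ.symm w) ∈ φ.target :=
        hqΦt.eventually_mem (hφto.mem_nhds haφt)
      have e4 : ∀ᶠ w in 𝓝 b, f (φ.symm (q (Φ.symm w))) ∈ ψ.source :=
        hfφt.eventually_mem (hψso.mem_nhds hfxsrc)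
      filter_upwards [e1, e2, e3, e4] with w h1 h2 h3 h4 using ⟨h1, h2, h3, h4⟩
    have hEv : ∀ᶠ v in 𝓝 (f x), ContMDiffAt 𝓘(ℝ, F) 𝓘(ℝ, E) (⊤ : ℕ∞) σ v ∧ f (σ v) = v := by
      have e0 : ∀ᶠ v in 𝓝 (f x), v ∈ ψ.source :=
        extChartAt_source_mem_nhds (I := 𝓘(ℝ, F)) (f x)
      filter_upwards [e0, hψt.eventually hEb] with v hv0 hv1
      obtain ⟨h1, h2, h3, h4⟩ := hv1
      constructor
      · -- smoothness of σ at v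
        have m1 : ContMDiffAt 𝓘(ℝ, F) 𝓘(ℝ, F) (⊤ : ℕ∞) ψ v := by
          apply contMDiffAt_extChartAt'
          rw [hψ, extChartAt_source] at hv0
          exact hv0
        have m2 : ContDiffAt ℝ (⊤ : ℕ∞) (fun w => q (Φ.symm w)) (ψ v) :=
          hqcd.contDiffAt.comp _ (hinv_smooth _ h1 h2)
        have m2' : ContMDiffAt 𝓘(ℝ, F) 𝓘(ℝ, E) (⊤ : ℕ∞) (fun w => q (Φ.symm w)) (ψ v) :=
          contMDiffAt_iff_contDiffAt.mpr m2
        have m4 : ContMDiffAt 𝓘(ℝ, E) 𝓘(ℝ, E) (⊤ : ℕ∞) φ.symm (q (Φ.symm (ψ v))) :=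
          (contMDiffOn_extChartAt_symm x).contMDiffAt (hφto.mem_nhds h3)
        exact m4.comp v (m2'.comp v m1)
      · -- section property at v
        have key : ψ (f (σ v)) = ψ v := by
          have h5 : ψ (f (σ v)) = h₀ (Φ.symm (ψ v)) := rfl
          rw [h5, ← hΦcoe, Φ.right_inv h1]
        have := congrArg ψ.symm key
        rwa [ψ.left_inv h4, ψ.left_inv hv0] at this
    obtain ⟨t, hta, hto⟩ := eventually_iff_exists_mem.mp hEv
    obtain ⟨U, hUt, hUo, hfxU⟩ := mem_nhds_iff.mp hta
    exact ⟨U, hUo, hfxU, σ, fun v hv => ((hto v (hUt hv)).1).contMDiffWithinAt,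
      hσfx, fun v hv => (hto v (hUt hv)).2⟩
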